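/- arXiv:2109.04010 — 3 statements merged into one kernel-verified Lean document; each statement's English description precedes it below -/
import Mathlib

section
/- Let λ^{(11)}, λ^{(12)} ∈ R^{n_1} and λ^{(21)}, λ^{(22)} ∈ R^{n_2}. Define the block matrix X = [[λ^{(11)}, λ^{(12)}, 0, 0], [0, 0, λ^{(21)}, λ^{(22)}]] ∈ R^{(n_1+n_2)×4} (columns as indicated) and the 4×4 orthogonal matrix U with rows (1,0,0,0), (0,0,1/√2,1/√2), (0,0,1/√2,−1/√2), (0,1,0,0). Then X U I_{3,1} U^⊤ X^⊤ equals the block matrix [[λ^{(11)}(λ^{(11)})^⊤, λ^{(12)}(λ^{(21)})^⊤], [λ^{(21)}(λ^{(12)})^⊤, λ^{(22)}(λ^{(22)})^⊤]]. -/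
open Matrix

theorem stmt_2 (n₁ n₂ : ℕ)
    (lam11 lam12 : Fin n₁ → ℝ) (lam21 lam22 : Fin n₂ → ℝ)
    (X : Matrix (Fin n₁ ⊕ Fin n₂) (Fin 4) ℝ)
    (hX : ∀ r c, X r c = Sum.elim
      (fun i => ![lam11 i, lam12 i, 0, 0] c)
      (fun i => ![0, 0, lam21 i, lam22 i] c) r)
    (U : Matrix (Fin 4) (Fin 4) ℝ)
    (hU : U = !![1, 0, 0, 0;
                 0, 0, 1 / Real.sqrt 2, 1 / Real.sqrt 2;
                 0, 0, 1 / Real.sqrt 2, -(1 / Real.sqrt 2);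
                 0, 1, 0, 0])
    (I31 : Matrix (Fin 4) (Fin 4) ℝ)
    (hI : I31 = Matrix.diagonal ![1, 1, 1, -1]) :
    X * U * I31 * Uᵀ * Xᵀ = Matrix.fromBlocks
      (Matrix.of fun i j => lam11 i * lam11 j)
      (Matrix.of fun i j => lam12 i * lam21 j)
      (Matrix.of fun i j => lam21 i * lam12 j)
      (Matrix.of fun i j => lam22 i * lam22 j) := by
  have hs : Real.sqrt 2 * Real.sqrt 2 = 2 := Real.mul_self_sqrt (by norm_num)
  have hs0 : Real.sqrt 2 ≠ 0 := by positivity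
  have hM : U * I31 * Uᵀ = !![1,0,0,0; 0,0,1,0; 0,1,0,0; 0,0,0,1] := by
    subst hU hI
    ext i j
    fin_cases i <;> fin_cases j <;>
      simp only [Matrix.mul_apply, Fin.sum_univ_four, Matrix.transpose_apply] <;>
      simp [Matrix.diagonal_apply, Matrix.vecHead, Matrix.vecTail, Function.comp] <;>
      field_simp <;> linarith [hs]
  have key : X * U * I31 * Uᵀ * Xᵀ = X * (U * I31 * Uᵀ) * Xᵀ := by
    simp only [Matrix.mul_assoc]
  rw [key, hM]
  ext i j
  rw [Matrix.mul_apply]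
  simp only [Matrix.mul_apply, Fin.sum_univ_four, Matrix.transpose_apply, hX]
  rcases i with i | i <;> rcases j with j | j <;>
    simp [Matrix.fromBlocks, Matrix.vecHead, Matrix.vecTail, Function.comp]
end

section
/- Every PABM edge probability matrix is a GRDPG edge probability matrix with signature (K(K+1)/2, K(K−1)/2): if P is n×n with blocks P^{(kℓ)} = λ^{(kℓ)}(λ^{(ℓk)})^⊤ for vectors λ^{(kℓ)} ∈ R^{n_k}, then there exist a block-diagonal matrix X ∈ R^{n×K²} and an orthogonal matrix U ∈ R^{K²×K²} (depending only on K) such that P = (XU) I_{p,q} (XU)^⊤ with p = K(K+1)/2, q = K(K−1)/2. -/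
open Matrix Finset


noncomputable def Umat (K : ℕ) : Matrix (Fin K × Fin K) (Fin K × Fin K) ℝ :=
  fun r c =>
    if c.1 = c.2 then (if r = c then 1 else 0)
    else if r = c then (Real.sqrt 2)⁻¹
    else if r = c.swap then (if c.1 < c.2 then (Real.sqrt 2)⁻¹ else -(Real.sqrt 2)⁻¹)
    else 0

def dvec (K : ℕ) : Fin K × Fin K → ℝ := fun c => if c.1 ≤ c.2 then 1 else -1

lemma U_support {K : ℕ} {r c : Fin K × Fin K} (h1 : r ≠ c) (h2 : r ≠ c.swap) :
    Umat K r c = 0 := by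
  unfold Umat; split_ifs <;> simp_all

lemma U_swap {K : ℕ} (r c : Fin K × Fin K) : Umat K r.swap c = Umat K r c * dvec K c := by
  obtain ⟨x, y⟩ := r; obtain ⟨a, b⟩ := c
  unfold Umat dvec
  simp only [Prod.swap_prod_mk]
  split_ifs <;> simp_all [Prod.ext_iff] <;> omega

lemma hs2 : (Real.sqrt 2)⁻¹ * (Real.sqrt 2)⁻¹ = 1 / 2 := by
  rw [← mul_inv, Real.mul_self_sqrt (by norm_num)]; norm_num

lemma UtU {K : ℕ} : (Umat K)ᵀ * Umat K = 1 := by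
  ext c c'
  rw [Matrix.mul_apply]
  simp only [transpose_apply]
  have hsub : (Finset.univ.filter fun r => Umat K r c * Umat K r c' ≠ 0) ⊆ {c, c.swap} := by
    intro r hr
    simp only [mem_filter, mem_univ, true_and] at hr
    by_contra hmem
    simp only [Finset.mem_insert, Finset.mem_singleton, not_or] at hmem
    exact hr (by rw [U_support hmem.1 hmem.2, zero_mul])
  rw [← Finset.sum_filter_ne_zero (s := univ), Finset.sum_subset hsub (by
    intro r _ hr
    simp only [mem_filter, mem_univ, true_and, not_not] at hr
    exact hr)]
  rcases eq_or_ne c c.swap with hcs | hcs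
  · rw [show ({c, c.swap} : Finset (Fin K × Fin K)) = {c} from by rw [← hcs]; simp,
      Finset.sum_singleton]
    obtain ⟨a, b⟩ := c; obtain ⟨a', b'⟩ := c'
    have hab : a = b := (Prod.ext_iff.mp hcs).1
    subst hab
    unfold Umat
    simp only [Matrix.one_apply, Prod.swap_prod_mk]
    split_ifs <;> simp_all [Prod.ext_iff, hs2] <;> omega
  · rw [Finset.sum_pair hcs]
    obtain ⟨a, b⟩ := c; obtain ⟨a', b'⟩ := c'
    have hab : a ≠ b := by
      intro h; exact hcs (by subst h; rfl)
    unfold Umat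
    simp only [Matrix.one_apply, Prod.swap_prod_mk]
    split_ifs <;> simp_all [Prod.ext_iff, hs2] <;> first | omega | norm_num

def Smat (K : ℕ) : Matrix (Fin K × Fin K) (Fin K × Fin K) ℝ :=
  fun r c => if r = c.swap then 1 else 0

lemma UDUt {K : ℕ} : Umat K * Matrix.diagonal (dvec K) * (Umat K)ᵀ = Smat K := by
  have hUUt : Umat K * (Umat K)ᵀ = 1 := by
    rw [mul_eq_one_comm]; exact UtU
  have hSU : Smat K * Umat K = Umat K * Matrix.diagonal (dvec K) := by
    ext r c
    rw [Matrix.mul_apply, Matrix.mul_diagonal, ← U_swap]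
    rw [Finset.sum_eq_single r.swap]
    · simp [Smat]
    · intro r' _ hne
      have : r ≠ r'.swap := by
        intro h; exact hne (by rw [h, Prod.swap_swap])
      simp [Smat, this]
    · intro h; exact absurd (Finset.mem_univ _) h
  calc Umat K * Matrix.diagonal (dvec K) * (Umat K)ᵀ
      = Smat K * Umat K * (Umat K)ᵀ := by rw [hSU]
    _ = Smat K * (Umat K * (Umat K)ᵀ) := by rw [Matrix.mul_assoc]
    _ = Smat K := by rw [hUUt, Matrix.mul_one]

lemma card_le_aux (K : ℕ) :
    (Finset.univ.filter fun c : Fin K × Fin K => c.1 ≤ c.2).card = (K+1).choose 2 := by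
  rw [← Fintype.card_subtype]
  have := Fintype.card_congr (Sym2.sortEquiv (α := Fin K))
  rw [Sym2.card, Fintype.card_fin] at this
  exact this.symm

lemma card_lt_aux (K : ℕ) :
    (Finset.univ.filter fun c : Fin K × Fin K => c.2 < c.1).card = K.choose 2 := by
  have hswap : (Finset.univ.filter fun c : Fin K × Fin K => c.2 < c.1).card
      = (Finset.univ.filter fun c : Fin K × Fin K => c.1 < c.2).card := by
    apply Finset.card_nbij (fun c => c.swap)
    · intro c hc; simp_all
    · intro a ha b hb hab
      simpa [Prod.ext_iff] using congrArg Prod.swap hab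
    · intro c hc; exact ⟨c.swap, by simp_all, by simp⟩
  have hdiag : (Finset.univ.filter fun c : Fin K × Fin K => c.1 = c.2).card = K := by
    have h := Finset.card_nbij (s := (univ : Finset (Fin K)))
      (t := Finset.univ.filter fun c : Fin K × Fin K => c.1 = c.2)
      (fun a => (a, a)) (by intro a _; simp) (by intro a _ b _ hab; simpa [Prod.ext_iff] using hab)
      (by rintro ⟨a, b⟩ hc
          simp only [coe_filter, Set.mem_setOf_eq] at hc
          exact ⟨a, by simp, by simp [hc.2]⟩)
    simpa using h.symm
  have hsplit : (Finset.univ.filter fun c : Fin K × Fin K => c.1 ≤ c.2).card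
      = (Finset.univ.filter fun c : Fin K × Fin K => c.1 < c.2).card
        + (Finset.univ.filter fun c : Fin K × Fin K => c.1 = c.2).card := by
    rw [← Finset.card_union_of_disjoint, ← Finset.filter_or]
    · congr 1; apply Finset.filter_congr; intro c _
      simp [le_iff_lt_or_eq]
    · rw [Finset.disjoint_filter]
      intro c _ h; simp [h.ne]
  have h1 := card_le_aux K
  have h2 : (K+1).choose 2 = K + K.choose 2 := by
    rw [Nat.choose_succ_succ]
    simp [Nat.choose_one_right]
  omega

theorem stmt_8 (K : ℕ) (hK : 1 ≤ K) (n : Fin K → ℕ)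
    (lam : (k : Fin K) → Fin K → (Fin (n k) → ℝ))
    (P : Matrix ((k : Fin K) × Fin (n k)) ((k : Fin K) × Fin (n k)) ℝ)
    (hP : ∀ (k ℓ : Fin K) (i : Fin (n k)) (j : Fin (n ℓ)),
      P ⟨k, i⟩ ⟨ℓ, j⟩ = lam k ℓ i * lam ℓ k j) :
    ∃ (X : Matrix ((k : Fin K) × Fin (n k)) (Fin K × Fin K) ℝ)
      (U : Matrix (Fin K × Fin K) (Fin K × Fin K) ℝ)
      (d : Fin K × Fin K → ℝ),
      (∀ (k : Fin K) (i : Fin (n k)) (c : Fin K × Fin K), c.1 ≠ k → X ⟨k, i⟩ c = 0) ∧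
      U * Uᵀ = 1 ∧
      (∀ c, d c = 1 ∨ d c = -1) ∧
      (Finset.univ.filter fun c : Fin K × Fin K => d c = 1).card = K * (K + 1) / 2 ∧
      (Finset.univ.filter fun c : Fin K × Fin K => d c = -1).card = K * (K - 1) / 2 ∧
      P = (X * U) * Matrix.diagonal d * (X * U)ᵀ := by
  classical
  set X : Matrix ((k : Fin K) × Fin (n k)) (Fin K × Fin K) ℝ :=
    fun r c => if h : c.1 = r.1 then lam r.1 c.2 r.2 else 0 with hX
  refine ⟨X, Umat K, dvec K, ?_, ?_, ?_, ?_, ?_, ?_⟩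
  · intro k i c hc
    simp [hX, hc]
  · rw [mul_eq_one_comm]; exact UtU
  · intro c; unfold dvec; split_ifs <;> simp
  · have he : (Finset.univ.filter fun c : Fin K × Fin K => dvec K c = 1)
        = Finset.univ.filter fun c : Fin K × Fin K => c.1 ≤ c.2 := by
      apply Finset.filter_congr; intro c _
      unfold dvec; split_ifs with h
      · norm_num; exact h
      · norm_num; exact lt_of_not_ge h
    rw [he, card_le_aux, Nat.choose_two_right]
    simp [Nat.mul_comm]
  · have he : (Finset.univ.filter fun c : Fin K × Fin K => dvec K c = -1)
        = Finset.univ.filter fun c : Fin K × Fin K => c.2 < c.1 := by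
      apply Finset.filter_congr; intro c _
      unfold dvec; split_ifs with h
      · norm_num; exact h
      · norm_num; exact lt_of_not_ge h
    rw [he, card_lt_aux, Nat.choose_two_right]
  · have hPS : P = X * Smat K * Xᵀ := by
      ext r r'
      obtain ⟨k, i⟩ := r; obtain ⟨ℓ, j⟩ := r'
      rw [hP, Matrix.mul_apply]
      have hXS : ∀ c : Fin K × Fin K, (X * Smat K) ⟨k, i⟩ c = X ⟨k, i⟩ c.swap := by
        intro c
        rw [Matrix.mul_apply, Finset.sum_eq_single c.swap]
        · simp [Smat]
        · intro c' _ hne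
          have : ¬ c' = c.swap := hne
          simp [Smat, this]
        · intro h; exact absurd (Finset.mem_univ _) h
      calc lam k ℓ i * lam ℓ k j
          = ∑ c : Fin K × Fin K, X ⟨k, i⟩ c.swap * Xᵀ c ⟨ℓ, j⟩ := by
            rw [Finset.sum_eq_single (ℓ, k)]
            · simp only [transpose_apply]; simp [hX]
            · rintro ⟨a, b⟩ _ hne
              rcases eq_or_ne b k with hb | hb
              · rcases eq_or_ne a ℓ with ha | ha
                · exact absurd (by rw [ha, hb]) hne
                · simp only [transpose_apply]; simp [hX, transpose_apply, ha]
              · simp [hX, transpose_apply, hb]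
            · intro h; exact absurd (Finset.mem_univ _) h
        _ = ∑ c : Fin K × Fin K, (X * Smat K) ⟨k, i⟩ c * Xᵀ c ⟨ℓ, j⟩ := by
            apply Finset.sum_congr rfl; intro c _; rw [hXS]
    rw [hPS, ← UDUt]
    simp only [Matrix.transpose_mul, Matrix.mul_assoc]
end

section
/- Let Y and Ỹ be n×d real matrices of full column rank d with Y I_{p,q} Y^⊤ = Ỹ I_{p,q} Ỹ^⊤ (where p+q=d). Then Q = I_{p,q} Ỹ^⊤ Y (Y^⊤ Y)^{−1} I_{p,q} satisfies Y = Ỹ Q and Q^⊤ I_{p,q} Q = I_{p,q}, i.e., Q lies in the indefinite orthogonal group O(p,q). -/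
open Matrix

theorem stmt_9 (n p q : ℕ)
    (Ipq : Matrix (Fin (p + q)) (Fin (p + q)) ℝ)
    (hI : Ipq = Matrix.diagonal (fun i : Fin (p + q) => if (i : ℕ) < p then (1 : ℝ) else -1))
    (Y Yt : Matrix (Fin n) (Fin (p + q)) ℝ)
    (hY : IsUnit (Yᵀ * Y)) (hYt : IsUnit (Ytᵀ * Yt))
    (hEq : Y * Ipq * Yᵀ = Yt * Ipq * Ytᵀ)
    (Q : Matrix (Fin (p + q)) (Fin (p + q)) ℝ)
    (hQ : Q = Ipq * (Ytᵀ * Y) * (Yᵀ * Y)⁻¹ * Ipq) :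
    Y = Yt * Q ∧ Qᵀ * Ipq * Q = Ipq := by
  have hI2 : Ipq * Ipq = 1 := by
    rw [hI, Matrix.diagonal_mul_diagonal]
    ext i j
    by_cases h : (i : ℕ) < p <;>
      simp [Matrix.diagonal_apply, Matrix.one_apply, h]
  have hIT : Ipqᵀ = Ipq := by rw [hI, Matrix.diagonal_transpose]
  have hGdet : IsUnit (Yᵀ * Y).det := (Matrix.isUnit_iff_isUnit_det _).mp hY
  have hGinv : (Yᵀ * Y) * (Yᵀ * Y)⁻¹ = 1 := Matrix.mul_nonsing_inv _ hGdet
  have h1 : Yt * Q = Y := by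
    calc Yt * Q = (Yt * Ipq * Ytᵀ) * Y * (Yᵀ * Y)⁻¹ * Ipq := by
          rw [hQ]; simp only [Matrix.mul_assoc]
      _ = (Y * Ipq * Yᵀ) * Y * (Yᵀ * Y)⁻¹ * Ipq := by rw [hEq]
      _ = Y * Ipq * ((Yᵀ * Y) * (Yᵀ * Y)⁻¹) * Ipq := by
          simp only [Matrix.mul_assoc]
      _ = Y := by rw [hGinv, Matrix.mul_one, Matrix.mul_assoc, hI2, Matrix.mul_one]
  have h2 : Q * Ipq * Qᵀ = Ipq := by
    have key : Yt * (Q * Ipq * Qᵀ) * Ytᵀ = Yt * Ipq * Ytᵀ := by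
      have : (Yt * Q) * Ipq * (Yt * Q)ᵀ = Yt * Ipq * Ytᵀ := by
        rw [h1, hEq]
      rw [Matrix.transpose_mul] at this
      simp only [← Matrix.mul_assoc] at this ⊢
      exact this
    have key2 : (Ytᵀ * Yt) * ((Q * Ipq * Qᵀ) * (Ytᵀ * Yt)) =
        (Ytᵀ * Yt) * (Ipq * (Ytᵀ * Yt)) := by
      calc (Ytᵀ * Yt) * ((Q * Ipq * Qᵀ) * (Ytᵀ * Yt))
          = Ytᵀ * (Yt * (Q * Ipq * Qᵀ) * Ytᵀ) * Yt := by
            simp only [Matrix.mul_assoc]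
        _ = Ytᵀ * (Yt * Ipq * Ytᵀ) * Yt := by rw [key]
        _ = (Ytᵀ * Yt) * (Ipq * (Ytᵀ * Yt)) := by simp only [Matrix.mul_assoc]
    have key3 : (Q * Ipq * Qᵀ) * (Ytᵀ * Yt) = Ipq * (Ytᵀ * Yt) :=
      hYt.mul_left_cancel key2
    exact hYt.mul_right_cancel key3
  have hQunit : Q * (Ipq * Qᵀ * Ipq) = 1 := by
    calc Q * (Ipq * Qᵀ * Ipq) = (Q * Ipq * Qᵀ) * Ipq := by
          simp only [Matrix.mul_assoc]
      _ = 1 := by rw [h2, hI2]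
  have hQunit' : (Ipq * Qᵀ * Ipq) * Q = 1 := mul_eq_one_comm.mp hQunit
  refine ⟨h1.symm, ?_⟩
  have : Ipq * ((Ipq * Qᵀ * Ipq) * Q) = Ipq * 1 := by rw [hQunit']
  calc Qᵀ * Ipq * Q = Ipq * ((Ipq * Qᵀ * Ipq) * Q) := by
        simp only [← Matrix.mul_assoc, hI2, Matrix.one_mul]
    _ = Ipq := by rw [hQunit', Matrix.mul_one]
end
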